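/- Let A : Ω → {0,1} be measurable and Y_1 : Ω → ℝ integrable, and assume that A and Y_1 are conditionally independent given σ(X). Let g : 𝒳 → (0,1] be measurable such that g ∘ X is a version of the conditional expectation E[A ∣ σ(X)], with g(X) > 0 almost surely, and assume E| Y_1 / g(X) | < ∞. Then for every bounded measurable h : 𝒳 → ℝ, E[ h(X) Y_1 ] = E[ h(X) · (A / g(X)) · Y_1 ]; since A Y_1 equals A times the observed outcome Y := A Y_1 + (1 − A) Y_0 for any Y_0, the counterfactual mean E[ h(X) Y_1 ] is identified by the inverse-probability-weighted observed-data functional E[ h(X) A Y / g(X) ]. -/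

import Mathlib

open MeasureTheory ProbabilityTheory

/-- Product rule for conditional expectation under conditional independence, when one factor
takes values in `{0, 1}`. -/
lemma condexp_mul_of_condIndepFun_aux {Ω : Type*} {m mΩ : MeasurableSpace Ω}
    [StandardBorelSpace Ω] (hm : m ≤ mΩ)
    {P : Measure Ω} [IsProbabilityMeasure P]
    {A Y1 : Ω → ℝ} (hA : Measurable A) (hA01 : ∀ ω, A ω = 0 ∨ A ω = 1)
    (hY1 : Measurable Y1) (hY1int : Integrable Y1 P)
    (hci : CondIndepFun m hm A Y1 P) :
    P[fun ω => A ω * Y1 ω | m] =ᵐ[P] fun ω => (P[A | m]) ω * (P[Y1 | m]) ω := by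
  have hAbd : ∀ ω, |A ω| ≤ 1 := by
    intro ω; rcases hA01 ω with h' | h' <;> simp [h']
  have hA_int : Integrable A P := by
    refine (integrable_const (1 : ℝ)).mono' hA.aestronglyMeasurable ?_
    exact Filter.Eventually.of_forall fun ω => by simpa using hAbd ω
  have hAY1_int : Integrable (fun ω => A ω * Y1 ω) P := by
    refine hY1int.bdd_mul (c := 1) hA.aestronglyMeasurable ?_
    exact Filter.Eventually.of_forall fun ω => by simpa using hAbd ω
  set S : Set Ω := A ⁻¹' {1} with hS_def
  have hS : MeasurableSet S := hA (measurableSet_singleton 1)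
  have hmemS : ∀ {ω}, A ω = 1 → ω ∈ S := by
    intro ω h'
    simp only [hS_def, Set.mem_preimage, Set.mem_singleton_iff, h']
  have hnmemS : ∀ {ω}, A ω = 0 → ω ∉ S := by
    intro ω h' hmem
    simp only [hS_def, Set.mem_preimage, Set.mem_singleton_iff] at hmem
    rw [h'] at hmem; norm_num at hmem
  set κ := condExpKernel P m with hκ_def
  have hker : ∀ t : Set ℝ, MeasurableSet t →
      ∀ᵐ ω ∂P, κ ω (S ∩ Y1 ⁻¹' t) = κ ω S * κ ω (Y1 ⁻¹' t) := by
    intro t ht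
    exact ae_of_ae_trim hm
      (hci.measure_inter_preimage_eq_mul {1} t (measurableSet_singleton 1) ht)
  have hQ : ∀ᵐ ω ∂P, ∀ q : ℚ,
      κ ω (S ∩ Y1 ⁻¹' (Set.Iic (q : ℝ))) = κ ω S * κ ω (Y1 ⁻¹' (Set.Iic (q : ℝ))) := by
    rw [ae_all_iff]
    exact fun q => hker _ measurableSet_Iic
  have hY1κ : ∀ᵐ ω ∂P, Integrable Y1 (κ ω) := hY1int.condExpKernel_ae
  have key : ∀ᵐ ω ∂P, ∫ y, A y * Y1 y ∂(κ ω) = (∫ y, A y ∂(κ ω)) * ∫ y, Y1 y ∂(κ ω) := by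
    filter_upwards [hQ, hY1κ] with ω hQω hIω
    have hmeas_eq : Measure.map Y1 ((κ ω).restrict S)
        = κ ω S • Measure.map Y1 (κ ω) := by
      refine MeasureTheory.ext_of_generate_finite _
        (BorelSpace.measurable_eq.trans Real.borel_eq_generateFrom_Iic_rat)
        Real.isPiSystem_Iic_rat ?_ ?_
      · intro s hs
        simp only [Set.iUnion_singleton_eq_range, Set.mem_range] at hs
        obtain ⟨q, rfl⟩ := hs
        rw [Measure.map_apply hY1 measurableSet_Iic,
          Measure.restrict_apply (hY1 measurableSet_Iic),
          Measure.smul_apply, Measure.map_apply hY1 measurableSet_Iic,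
          Set.inter_comm, smul_eq_mul]
        exact hQω q
      · rw [Measure.map_apply hY1 MeasurableSet.univ, Set.preimage_univ,
          Measure.restrict_apply_univ, Measure.smul_apply,
          Measure.map_apply hY1 MeasurableSet.univ, Set.preimage_univ, smul_eq_mul]
        simp [measure_univ]
    have h1 : ∫ y, A y * Y1 y ∂(κ ω) = ∫ y in S, Y1 y ∂(κ ω) := by
      rw [← integral_indicator hS]
      congr 1
      funext y
      rcases hA01 y with h' | h'
      · rw [h', zero_mul, Set.indicator_of_notMem (hnmemS h')]
      · rw [h', one_mul, Set.indicator_of_mem (hmemS h')]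
    have h2 : ∫ y in S, Y1 y ∂(κ ω) = ∫ x, x ∂(Measure.map Y1 ((κ ω).restrict S)) := by
      have := integral_map (φ := Y1) (μ := (κ ω).restrict S) (f := id)
        hY1.aemeasurable aestronglyMeasurable_id
      simpa using this.symm
    have h3 : ∫ x, x ∂(κ ω S • Measure.map Y1 (κ ω))
        = (κ ω S).toReal * ∫ y, Y1 y ∂(κ ω) := by
      have := integral_map (φ := Y1) (μ := κ ω) (f := id)
        hY1.aemeasurable aestronglyMeasurable_id
      rw [integral_smul_measure]
      simp only [id_eq] at this
      rw [this, smul_eq_mul]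
    have h4 : ∫ y, A y ∂(κ ω) = (κ ω S).toReal := by
      have hfun : (fun y => A y) = S.indicator (fun _ => (1 : ℝ)) := by
        funext y
        rcases hA01 y with h' | h'
        · rw [h', Set.indicator_of_notMem (hnmemS h')]
        · rw [h', Set.indicator_of_mem (hmemS h')]
      rw [hfun, integral_indicator_const (1 : ℝ) hS, smul_eq_mul, mul_one]
      rfl
    rw [h1, h2, hmeas_eq, h3, h4]
  have e1 := condExp_ae_eq_integral_condExpKernel (μ := P) hm hAY1_int
  have e2 := condExp_ae_eq_integral_condExpKernel (μ := P) hm hA_int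
  have e3 := condExp_ae_eq_integral_condExpKernel (μ := P) hm hY1int
  filter_upwards [e1, e2, e3, key] with ω h1 h2 h3 hk
  rw [h1, h2, h3]
  exact hk

/-- Under conditional independence of the treatment `A` and the counterfactual outcome `Y1`
given `σ(X)`, with propensity `g ∘ X` a version of `E[A ∣ σ(X)]` taking values in `(0,1]`, for
every bounded measurable `h` we have `E[h(X) Y1] = E[h(X) (A / g(X)) Y1]`; since `A Y1 = A Y`
for the observed outcome `Y = A Y1 + (1 − A) Y0`, the counterfactual mean is identified by the
inverse-probability-weighted observed-data functional `E[h(X) A Y / g(X)]`. -/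
theorem stmt16 {Ω 𝒳 : Type*} [MeasurableSpace Ω] [StandardBorelSpace Ω] [Nonempty Ω]
    [MeasurableSpace 𝒳] [StandardBorelSpace 𝒳]
    (P : Measure Ω) [IsProbabilityMeasure P]
    (X : Ω → 𝒳) (hX : Measurable X)
    (A : Ω → ℝ) (hA : Measurable A) (hA01 : ∀ ω, A ω = 0 ∨ A ω = 1)
    (Y1 : Ω → ℝ) (hY1 : Measurable Y1) (hY1int : Integrable Y1 P)
    (hci : CondIndepFun (MeasurableSpace.comap X inferInstance) hX.comap_le A Y1 P)
    (g : 𝒳 → ℝ) (hg : Measurable g) (hgmem : ∀ x, g x ∈ Set.Ioc (0 : ℝ) 1)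
    (hgpos : ∀ᵐ ω ∂P, 0 < g (X ω))
    (hgcond : (fun ω => g (X ω)) =ᵐ[P] P[A | MeasurableSpace.comap X inferInstance])
    (hint : Integrable (fun ω => |Y1 ω / g (X ω)|) P)
    (h : 𝒳 → ℝ) (hh : Measurable h) (hhbd : ∃ C : ℝ, ∀ x, |h x| ≤ C) :
    (∫ ω, h (X ω) * Y1 ω ∂P = ∫ ω, h (X ω) * (A ω / g (X ω)) * Y1 ω ∂P) ∧
    (∀ Y0 : Ω → ℝ,
      ∫ ω, h (X ω) * Y1 ω ∂P
        = ∫ ω, h (X ω) * A ω * (A ω * Y1 ω + (1 - A ω) * Y0 ω) / g (X ω) ∂P) := by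
  obtain ⟨C, hC⟩ := hhbd
  have hm : MeasurableSpace.comap X inferInstance ≤ (inferInstance : MeasurableSpace Ω) :=
    hX.comap_le
  have hgX : ∀ ω, 0 < g (X ω) := fun ω => (hgmem (X ω)).1
  have hAbd : ∀ ω, |A ω| ≤ 1 := by
    intro ω; rcases hA01 ω with h' | h' <;> simp [h']
  have hA_int : Integrable A P := by
    refine (integrable_const (1 : ℝ)).mono' hA.aestronglyMeasurable ?_
    exact Filter.Eventually.of_forall fun ω => by simpa using hAbd ω
  have hAY1_int : Integrable (fun ω => A ω * Y1 ω) P := by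
    refine hY1int.bdd_mul (c := 1) hA.aestronglyMeasurable ?_
    exact Filter.Eventually.of_forall fun ω => by simpa using hAbd ω
  have hL := condexp_mul_of_condIndepFun_aux hm hA hA01 hY1 hY1int hci
  have hXm : Measurable[MeasurableSpace.comap X inferInstance] X := fun s hs => ⟨s, hs, rfl⟩
  have hφm : StronglyMeasurable[MeasurableSpace.comap X inferInstance]
      (fun ω => h (X ω) / g (X ω)) :=
    ((hh.comp hXm).div (hg.comp hXm)).stronglyMeasurable
  have hhXm : StronglyMeasurable[MeasurableSpace.comap X inferInstance]
      (fun ω => h (X ω)) :=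
    (hh.comp hXm).stronglyMeasurable
  have hφAY1_int : Integrable (fun ω => h (X ω) / g (X ω) * (A ω * Y1 ω)) P := by
    refine (hint.const_mul C).mono' ?_ ?_
    · exact (((hh.comp hX).div (hg.comp hX)).mul (hA.mul hY1)).aestronglyMeasurable
    · refine Filter.Eventually.of_forall fun ω => ?_
      have habs : |h (X ω) / g (X ω) * (A ω * Y1 ω)|
          = |h (X ω)| * |A ω| * |Y1 ω / g (X ω)| := by
        rw [abs_mul, abs_div, abs_mul, abs_div]
        ring
      rw [Real.norm_eq_abs, habs]
      have h1 : |h (X ω)| * |A ω| ≤ C * 1 :=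
        mul_le_mul (hC (X ω)) (hAbd ω) (abs_nonneg (A ω))
          ((abs_nonneg (h (X ω))).trans (hC (X ω)))
      calc |h (X ω)| * |A ω| * |Y1 ω / g (X ω)|
          ≤ C * 1 * |Y1 ω / g (X ω)| :=
            mul_le_mul_of_nonneg_right h1 (abs_nonneg _)
        _ = C * |Y1 ω / g (X ω)| := by ring
  have hhXY1_int : Integrable (fun ω => h (X ω) * Y1 ω) P := by
    refine hY1int.bdd_mul (c := C) (hh.comp hX).aestronglyMeasurable ?_
    exact Filter.Eventually.of_forall fun ω => by
      simpa [Real.norm_eq_abs] using hC (X ω)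
  have step1 : P[(fun ω => h (X ω) / g (X ω)) * fun ω => A ω * Y1 ω
        | MeasurableSpace.comap X inferInstance]
      =ᵐ[P] (fun ω => h (X ω) / g (X ω))
        * P[fun ω => A ω * Y1 ω | MeasurableSpace.comap X inferInstance] :=
    condExp_mul_of_stronglyMeasurable_left hφm hφAY1_int hAY1_int
  have step5 : P[(fun ω => h (X ω)) * Y1 | MeasurableSpace.comap X inferInstance]
      =ᵐ[P] (fun ω => h (X ω)) * P[Y1 | MeasurableSpace.comap X inferInstance] :=
    condExp_mul_of_stronglyMeasurable_left hhXm hhXY1_int hY1int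
  have step2 : (fun ω => h (X ω) / g (X ω))
        * P[fun ω => A ω * Y1 ω | MeasurableSpace.comap X inferInstance]
      =ᵐ[P] (fun ω => h (X ω)) * P[Y1 | MeasurableSpace.comap X inferInstance] := by
    filter_upwards [hL, hgcond] with ω e1 e2
    simp only [Pi.mul_apply]
    rw [e1, ← e2]
    have hne : g (X ω) ≠ 0 := (hgX ω).ne'
    field_simp
  have main : ∫ ω, h (X ω) * (A ω / g (X ω)) * Y1 ω ∂P
      = ∫ ω, h (X ω) * Y1 ω ∂P := by
    calc ∫ ω, h (X ω) * (A ω / g (X ω)) * Y1 ω ∂P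
        = ∫ ω, ((fun ω => h (X ω) / g (X ω)) * fun ω => A ω * Y1 ω) ω ∂P := by
          refine integral_congr_ae (Filter.Eventually.of_forall fun ω => ?_)
          simp only [Pi.mul_apply]
          ring
      _ = ∫ ω, (P[(fun ω => h (X ω) / g (X ω)) * fun ω => A ω * Y1 ω
            | MeasurableSpace.comap X inferInstance]) ω ∂P :=
          (integral_condExp hm).symm
      _ = ∫ ω, ((fun ω => h (X ω)) * P[Y1 | MeasurableSpace.comap X inferInstance]) ω ∂P :=
          integral_congr_ae (step1.trans step2)
      _ = ∫ ω, (P[(fun ω => h (X ω)) * Y1 | MeasurableSpace.comap X inferInstance]) ω ∂P :=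
          (integral_congr_ae step5).symm
      _ = ∫ ω, ((fun ω => h (X ω)) * Y1) ω ∂P := integral_condExp hm
      _ = ∫ ω, h (X ω) * Y1 ω ∂P := rfl
  refine ⟨main.symm, fun Y0 => ?_⟩
  rw [main.symm]
  refine integral_congr_ae (Filter.Eventually.of_forall fun ω => ?_)
  rcases hA01 ω with h' | h'
  · simp [h']
  · simp only [h', one_mul, mul_one, sub_self, zero_mul, add_zero]
    ring
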